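/- arXiv:2510.21741 — 2 statements merged into one kernel-verified Lean document; each statement's English description precedes it below -/
import Mathlib

section
/- Let F be a field and let ι : a → e, π : e → g be a central extension of g by a. Then there exist a 2-cocycle ω of g with coefficients in a and a Lie algebra isomorphism φ : e ≃ e_ω such that φ (ι A) = ι_ω A for all A ∈ a and π_ω (φ E) = π E for all E ∈ e; that is, every central extension is equivalent to one constructed from a 2-cocycle. -/
namespace VirasoroProject

variable (F : Type*) [CommRing F]
variable (g : Type*) [LieRing g] [LieAlgebra F g]
variable (a : Type*) [AddCommGroup a] [Module F a]

/-- A 2-cocycle of a Lie algebra `g` with coefficients in the `F`-module `a`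
(regarded as an abelian Lie algebra): a bilinear map `ω : g → g → a` with
`ω X X = 0` satisfying the Leibniz rule. -/
structure LieTwoCocycle where
  toBilin : g →ₗ[F] g →ₗ[F] a
  self' : ∀ X, toBilin X X = 0
  leibniz' : ∀ X Y Z, toBilin X ⁅Y, Z⁆ = toBilin ⁅X, Y⁆ Z + toBilin Y ⁅X, Z⁆

variable {F g a}

/-- The central extension `e_ω` of `g` by `a` determined by a 2-cocycle `ω`:
the product module `g × a`. -/
def LieTwoCocycle.CentralExtension (_ω : LieTwoCocycle F g a) := g × a

namespace LieTwoCocycle.CentralExtension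

variable (ω : LieTwoCocycle F g a)

instance : AddCommGroup ω.CentralExtension := inferInstanceAs (AddCommGroup (g × a))

instance : Module F ω.CentralExtension := inferInstanceAs (Module F (g × a))

/-- The Lie ring structure on `e_ω`: `⁅(X, A), (Y, B)⁆ = (⁅X, Y⁆, ω X Y)`. -/
instance : LieRing ω.CentralExtension :=
  { (inferInstance : AddCommGroup (g × a)) with
    bracket := fun X Y => (⁅X.1, Y.1⁆, ω.toBilin X.1 Y.1)
    add_lie := by
      intro x y z
      refine Prod.ext ?_ ?_
      · show ⁅x.1 + y.1, z.1⁆ = ⁅x.1, z.1⁆ + ⁅y.1, z.1⁆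
        exact add_lie _ _ _
      · show ω.toBilin (x.1 + y.1) z.1 = ω.toBilin x.1 z.1 + ω.toBilin y.1 z.1
        simp
    lie_add := by
      intro x y z
      refine Prod.ext ?_ ?_
      · show ⁅x.1, y.1 + z.1⁆ = ⁅x.1, y.1⁆ + ⁅x.1, z.1⁆
        exact lie_add _ _ _
      · show ω.toBilin x.1 (y.1 + z.1) = ω.toBilin x.1 y.1 + ω.toBilin x.1 z.1
        simp
    lie_self := by
      intro x
      refine Prod.ext ?_ ?_
      · show ⁅x.1, x.1⁆ = (0 : g)
        exact lie_self _
      · show ω.toBilin x.1 x.1 = (0 : a)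
        exact ω.self' _
    leibniz_lie := by
      intro x y z
      refine Prod.ext ?_ ?_
      · show ⁅x.1, ⁅y.1, z.1⁆⁆ = ⁅⁅x.1, y.1⁆, z.1⁆ + ⁅y.1, ⁅x.1, z.1⁆⁆
        exact leibniz_lie _ _ _
      · show ω.toBilin x.1 ⁅y.1, z.1⁆
            = ω.toBilin ⁅x.1, y.1⁆ z.1 + ω.toBilin y.1 ⁅x.1, z.1⁆
        exact ω.leibniz' _ _ _ }

/-- The Lie algebra structure on `e_ω`. -/
instance : LieAlgebra F ω.CentralExtension :=
  { (inferInstance : Module F ω.CentralExtension) with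
    lie_smul := by
      intro c x y
      refine Prod.ext ?_ ?_
      · show ⁅x.1, c • y.1⁆ = c • ⁅x.1, y.1⁆
        exact lie_smul _ _ _
      · show ω.toBilin x.1 (c • y.1) = c • ω.toBilin x.1 y.1
        simp }

/-- The inclusion `ι : a → e_ω`, `A ↦ (0, A)`, as a linear map. -/
def emb : a →ₗ[F] ω.CentralExtension where
  toFun A := ((0, A) : g × a)
  map_add' A B := by
    refine Prod.ext ?_ ?_
    · show (0 : g) = 0 + 0
      simp
    · rfl
  map_smul' c A := by
    refine Prod.ext ?_ ?_
    · show (0 : g) = c • 0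
      simp
    · rfl

/-- The projection `π : e_ω → g`, `(X, A) ↦ X`, as a Lie algebra homomorphism. -/
def proj : ω.CentralExtension →ₗ⁅F⁆ g where
  toFun E := E.1
  map_add' _ _ := rfl
  map_smul' _ _ := rfl
  map_lie' := rfl

end LieTwoCocycle.CentralExtension

section Statement8

variable {F' : Type*} [Field F']
variable {g' : Type*} [LieRing g'] [LieAlgebra F' g']
variable {a' : Type*} [AddCommGroup a'] [Module F' a']
variable {e : Type*} [LieRing e] [LieAlgebra F' e]

/-- STATEMENT 8: over a field, every central extension `0 → a → e → g → 0` is equivalent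
to one constructed from a 2-cocycle: there are a 2-cocycle `ω` and a Lie algebra
isomorphism `φ : e ≃ e_ω` commuting with the inclusions and projections. -/
theorem exists_cocycle_equiv_of_isCentralExtension
    (i : a' →ₗ[F'] e) (p : e →ₗ⁅F'⁆ g')
    (hinj : Function.Injective i) (hsurj : Function.Surjective p)
    (hexact : ∀ E : e, (∃ A : a', i A = E) ↔ p E = 0)
    (hcentral : ∀ (A : a') (E : e), ⁅i A, E⁆ = 0) :
    ∃ (ω : LieTwoCocycle F' g' a') (φ : e ≃ₗ⁅F'⁆ ω.CentralExtension),
      (∀ A : a', φ (i A) = LieTwoCocycle.CentralExtension.emb ω A) ∧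
      (∀ E : e, LieTwoCocycle.CentralExtension.proj ω (φ E) = p E) := by
  classical
  -- choose a linear section of p
  obtain ⟨s, hs⟩ := (p : e →ₗ[F'] g').exists_rightInverse_of_surjective
    (LinearMap.range_eq_top.mpr hsurj)
  have hps : ∀ X : g', p (s X) = X := fun X => LinearMap.ext_iff.mp hs X
  have hc : ∀ (A : a') (E : e), ⁅E, i A⁆ = 0 := fun A E => by
    rw [← lie_skew, hcentral, neg_zero]
  have hker : ∀ E : e, p (E - s (p E)) = 0 := fun E => by
    simp [map_sub, hps]
  -- define σ E = i⁻¹ (E - s (p E))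
  let σf : e → a' := fun E => ((hexact (E - s (p E))).mpr (hker E)).choose
  have hσ : ∀ E : e, i (σf E) = E - s (p E) :=
    fun E => ((hexact (E - s (p E))).mpr (hker E)).choose_spec
  have σadd : ∀ E E', σf (E + E') = σf E + σf E' := by
    intro E E'
    apply hinj
    simp only [map_add, hσ]
    abel
  have σsmul : ∀ (c : F') (E : e), σf (c • E) = c • σf E := by
    intro c E
    apply hinj
    simp only [map_smul, hσ, smul_sub]
  let σ : e →ₗ[F'] a' := ⟨⟨σf, σadd⟩, σsmul⟩
  have hσ' : ∀ E : e, i (σ E) = E - s (p E) := hσ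
  -- the cocycle
  have hω : ∀ X Y : g', i (σ ⁅s X, s Y⁆) = ⁅s X, s Y⁆ - s ⁅X, Y⁆ := by
    intro X Y
    rw [hσ']
    congr 2
    rw [LieHom.map_lie, hps, hps]
  -- centrality: brackets only depend on s-parts
  have hrep : ∀ X Y : g', (s ⁅X, Y⁆ : e) = ⁅s X, s Y⁆ - i (σ ⁅s X, s Y⁆) := by
    intro X Y; rw [hω]; abel
  let ω : LieTwoCocycle F' g' a' :=
    { toBilin := LinearMap.mk₂ F' (fun X Y => σ ⁅s X, s Y⁆)
        (fun X X' Y => by simp [map_add, add_lie])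
        (fun c X Y => by simp [map_smul, smul_lie])
        (fun X Y Y' => by simp [map_add, lie_add])
        (fun c X Y => by simp [map_smul, lie_smul])
      self' := fun X => by simp
      leibniz' := by
        intro X Y Z
        apply hinj
        simp only [LinearMap.mk₂_apply, map_add, hω]
        rw [hrep Y Z, hrep X Y, hrep X Z]
        simp only [lie_sub, sub_lie, hc, hcentral, sub_zero]
        have hJ : s ⁅X, ⁅Y, Z⁆⁆ = s ⁅⁅X, Y⁆, Z⁆ + s ⁅Y, ⁅X, Z⁆⁆ := by
          rw [← map_add]; congr 1; exact leibniz_lie X Y Z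
        rw [hJ, leibniz_lie (s X) (s Y) (s Z)]
        abel }
  refine ⟨ω, ?_⟩
  -- the linear equivalence
  have hpi : ∀ A : a', p (i A) = 0 := fun A => (hexact (i A)).mp ⟨A, rfl⟩
  let fwd : e →ₗ[F'] ω.CentralExtension := LinearMap.prod (p : e →ₗ[F'] g') σ
  let bwd : ω.CentralExtension →ₗ[F'] e :=
    s ∘ₗ LinearMap.fst F' g' a' + i ∘ₗ LinearMap.snd F' g' a'
  have h1 : fwd ∘ₗ bwd = LinearMap.id := by
    apply LinearMap.ext
    rintro ⟨X, A⟩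
    refine Prod.ext ?_ ?_
    · show p (s X + i A) = X
      simp [map_add, hps, hpi]
    · show σ (s X + i A) = A
      apply hinj
      rw [hσ']
      simp [map_add, hps, hpi]
  have h2 : bwd ∘ₗ fwd = LinearMap.id := by
    apply LinearMap.ext
    intro E
    show s (p E) + i (σ E) = E
    rw [hσ']
    abel
  let φl : e ≃ₗ[F'] ω.CentralExtension := LinearEquiv.ofLinear fwd bwd h1 h2
  have key : ∀ E E' : e, ⁅E, E'⁆ = ⁅s (p E), s (p E')⁆ := by
    intro E E'
    have hE : E = s (p E) + i (σ E) := by rw [hσ']; abel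
    have hE' : E' = s (p E') + i (σ E') := by rw [hσ']; abel
    conv_lhs => rw [hE, hE']
    simp [lie_add, add_lie, hc, hcentral]
  let φ : e ≃ₗ⁅F'⁆ ω.CentralExtension :=
    { φl with
      map_lie' := by
        intro E E'
        show fwd ⁅E, E'⁆ = ⁅fwd E, fwd E'⁆
        refine Prod.ext ?_ ?_
        · show p ⁅E, E'⁆ = ⁅p E, p E'⁆
          exact p.map_lie E E'
        · show σ ⁅E, E'⁆ = ω.toBilin (p E) (p E')
          apply hinj
          rw [hσ']
          show ⁅E, E'⁆ - s (p ⁅E, E'⁆) = i (σ ⁅s (p E), s (p E')⁆)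
          rw [hω, p.map_lie, key E E'] }
  refine ⟨φ, ?_, ?_⟩
  · intro A
    show fwd (i A) = LieTwoCocycle.CentralExtension.emb ω A
    refine Prod.ext ?_ ?_
    · exact hpi A
    · show σ (i A) = A
      apply hinj
      rw [hσ']
      simp [hpi]
  · intro E
    rfl

end Statement8

end VirasoroProject
end

section
/- Let M be an A-module with a vector u ∈ M satisfying (η i).1 • u = algebraMap F A ((η i).2) • u for every i : ι. Then there exists a unique A-linear map f : M_η → A-module M such that f v_η = u; i.e. the Verma module M_η satisfies the universal property of highest weight modules for the data η. -/
namespace VirasoroProject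

variable (F : Type*) [Field F] (A : Type*) [Ring A] [Algebra F A]
variable {ι : Type*}

/-- The Verma ideal `I_η`: the left ideal of `A` (as a submodule of `A` regarded as a
left module over itself) spanned by the elements `(η i).1 - algebraMap F A (η i).2`. -/
def vermaIdeal (η : ι → A × F) : Submodule A A :=
  Submodule.span A (Set.range fun i => (η i).1 - algebraMap F A (η i).2)

/-- The Verma module `M_η := A ⧸ I_η`, a left `A`-module. -/
abbrev VermaModule (η : ι → A × F) := A ⧸ vermaIdeal F A η

/-- The highest weight vector `v_η`: the image of `1 ∈ A` in the quotient `A ⧸ I_η`. -/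
def hwVec (η : ι → A × F) : VermaModule F A η :=
  Submodule.Quotient.mk 1

/-- STATEMENT 17: universal property of the Verma module: for any `A`-module `M` with a
vector `u` satisfying `(η i).1 • u = algebraMap F A (η i).2 • u` for all `i`, there is a
unique `A`-linear map `f : M_η → M` with `f v_η = u`. -/
theorem vermaModule_universal_property (η : ι → A × F)
    (M : Type*) [AddCommGroup M] [Module A M] (u : M)
    (hu : ∀ i : ι, (η i).1 • u = algebraMap F A ((η i).2) • u) :
    ∃! f : VermaModule F A η →ₗ[A] M, f (hwVec F A η) = u := by
  have hle : vermaIdeal F A η ≤ LinearMap.ker (LinearMap.toSpanSingleton A M u) := by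
    rw [vermaIdeal, Submodule.span_le]
    rintro x ⟨i, rfl⟩
    simp [LinearMap.mem_ker, sub_smul, hu i]
  refine ⟨(vermaIdeal F A η).liftQ (LinearMap.toSpanSingleton A M u) hle, ?_, ?_⟩
  · simp [hwVec]
  · intro g hg
    apply LinearMap.ext
    intro x
    obtain ⟨a, rfl⟩ := Submodule.Quotient.mk_surjective _ x
    have : (Submodule.Quotient.mk a : VermaModule F A η) = a • hwVec F A η := by
      simp [hwVec, ← Submodule.Quotient.mk_smul]
    rw [this, map_smul, map_smul, hg]
    simp [hwVec]

end VirasoroProject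
end
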